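/- Let ρ ≥ 3 and let α₁, …, α_ρ ∈ ℂ be ℚ-linearly independent. Then there exists c > 0 such that for every real Y ≥ 1 there is a nonzero integer vector b = (b₁,…,b_ρ) ∈ ℤ^ρ with |Σ_j α_j b_j| ≤ 1/Y and ‖b‖₂ ≤ c·Y^{2/(ρ−2)}. -/

import Mathlib

set_option maxHeartbeats 1000000


/-- The point of `ℝ^ρ` (with Euclidean norm) corresponding to an integer vector. -/
def latticeVec (ρ : ℕ) (b : Fin ρ → ℤ) : EuclideanSpace ℝ (Fin ρ) := WithLp.toLp 2 (fun i => (b i : ℝ))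

/-- Let `ρ ≥ 3` and `α₁, …, α_ρ ∈ ℂ` be `ℚ`-linearly independent. There is `c > 0`
such that for every real `Y ≥ 1` there is a nonzero `b ∈ ℤ^ρ` with
`|Σ_j α_j b_j| ≤ 1/Y` and `‖b‖₂ ≤ c·Y^{2/(ρ-2)}`. -/
theorem exists_good_approximation (ρ : ℕ) (hρ : 3 ≤ ρ) (α : Fin ρ → ℂ)
    (hα : LinearIndependent ℚ α) :
    ∃ c > (0 : ℝ), ∀ Y : ℝ, 1 ≤ Y →
      ∃ b : Fin ρ → ℤ, b ≠ 0 ∧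
        ‖∑ j, α j * (b j : ℂ)‖ ≤ 1 / Y ∧
        ‖latticeVec ρ b‖ ≤ c * Y ^ (2 / ((ρ : ℝ) - 2)) := by
  classical
  set d : ℝ := (ρ : ℝ) - 2 with hd
  have hρ3 : (3:ℝ) ≤ (ρ:ℝ) := by exact_mod_cast hρ
  have hd1 : (1:ℝ) ≤ d := by simp only [hd]; linarith
  have hd0 : (0:ℝ) < d := lt_of_lt_of_le one_pos hd1
  set A : ℝ := (∑ j, ‖α j‖) + 1 with hA
  have hsum0 : 0 ≤ ∑ j, ‖α j‖ :=
    Finset.sum_nonneg fun j _ => norm_nonneg _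
  have hA1 : (1:ℝ) ≤ A := by simp only [hA]; linarith
  have hA0 : (0:ℝ) < A := lt_of_lt_of_le one_pos hA1
  have hρ0 : (0:ℝ) < (ρ:ℝ) := by linarith
  refine ⟨Real.sqrt ρ * 2 * (49 * A^2) ^ (1/d), ?_, ?_⟩
  · have h1 : (0:ℝ) < Real.sqrt ρ := Real.sqrt_pos.mpr hρ0
    have h2 : (0:ℝ) < (49 * A^2) ^ (1/d) := Real.rpow_pos_of_pos (by positivity) _
    positivity
  intro Y hY
  have hY0 : (0:ℝ) < Y := lt_of_lt_of_le one_pos hY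
  set R : ℝ := (49 * A^2 * Y^2) ^ (1/d) with hRdef
  have hA2 : (1:ℝ) ≤ A^2 := by nlinarith
  have hY2 : (1:ℝ) ≤ Y^2 := by nlinarith
  have hbase1 : (1:ℝ) ≤ 49 * A^2 * Y^2 := by
    have h12 : (1:ℝ)*1 ≤ A^2 * Y^2 := mul_le_mul hA2 hY2 zero_le_one (by positivity)
    linarith
  have hbase0 : (0:ℝ) ≤ 49 * A^2 * Y^2 := by linarith
  have hR1 : (1:ℝ) ≤ R := Real.one_le_rpow hbase1 (by positivity)
  have hR0 : (0:ℝ) ≤ R := by linarith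
  set N : ℕ := ⌈R⌉₊ with hNdef
  have hRN : R ≤ (N:ℝ) := Nat.le_ceil R
  have hN1 : 1 ≤ N := by
    have : (0:ℝ) < R := by linarith
    exact Nat.one_le_iff_ne_zero.mpr (by positivity)
  have hN1R : (1:ℝ) ≤ (N:ℝ) := by exact_mod_cast hN1
  have hN2R : (N:ℝ) ≤ 2 * R := by
    have := Nat.ceil_lt_add_one hR0
    have : (N:ℝ) < R + 1 := this
    linarith
  -- key power inequality : (N:ℝ)^ρ ≥ 49 A² Y² N²
  have hRd : R ^ d = 49 * A^2 * Y^2 := by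
    rw [hRdef, ← Real.rpow_mul hbase0, one_div_mul_cancel hd0.ne', Real.rpow_one]
  have hcast : ((ρ - 2 : ℕ) : ℝ) = d := by
    have h2 : (2:ℕ) ≤ ρ := by omega
    push_cast [h2]
    rfl
  have hNpow : 49 * A^2 * Y^2 * (N:ℝ)^2 ≤ (N:ℝ)^ρ := by
    have h1 : R ^ (ρ - 2 : ℕ) ≤ (N:ℝ) ^ (ρ - 2 : ℕ) := pow_le_pow_left₀ hR0 hRN _
    have h2 : R ^ (ρ - 2 : ℕ) = 49 * A^2 * Y^2 := by
      rw [← Real.rpow_natCast R (ρ - 2), hcast, hRd]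
    have h3 : (N:ℝ)^ρ = (N:ℝ)^(ρ - 2 : ℕ) * (N:ℝ)^2 := by
      rw [← pow_add]
      congr 1
      omega
    rw [h3]
    have hN20 : (0:ℝ) ≤ (N:ℝ)^2 := by positivity
    nlinarith [h1, h2, hN20]
  -- the linear form
  set L : (Fin ρ → ℤ) → ℂ := fun b => ∑ j, α j * (b j : ℂ) with hL
  set S : Finset (Fin ρ → ℤ) := Finset.Icc 0 (fun _ => (N:ℤ)) with hS
  have hSmem : ∀ b ∈ S, ∀ i, 0 ≤ b i ∧ b i ≤ (N:ℤ) := by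
    intro b hb i
    rw [hS, Finset.mem_Icc] at hb
    exact ⟨hb.1 i, hb.2 i⟩
  have hLbound : ∀ b ∈ S, ‖L b‖ ≤ A * N := by
    intro b hb
    calc ‖L b‖ ≤ ∑ j, ‖α j * (b j : ℂ)‖ := by
          exact norm_sum_le _ _
      _ ≤ ∑ j, ‖α j‖ * (N:ℝ) := by
          apply Finset.sum_le_sum
          intro j _
          rw [norm_mul]
          apply mul_le_mul_of_nonneg_left _ (norm_nonneg _)
          have := hSmem b hb j
          rw [Complex.norm_intCast]
          have h1 : |b j| ≤ (N:ℤ) := by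
            rw [abs_le]; constructor <;> omega
          calc |((b j : ℤ):ℝ)| = ((|b j| : ℤ) : ℝ) := by push_cast; rfl
            _ ≤ ((N:ℤ):ℝ) := by exact_mod_cast h1
            _ = (N:ℝ) := by push_cast; rfl
      _ = (∑ j, ‖α j‖) * (N:ℝ) := by rw [Finset.sum_mul]
      _ ≤ A * N := by
          apply mul_le_mul_of_nonneg_right _ (by positivity)
          simp only [hA]; linarith
  set B : ℕ := ⌈2 * A * N * Y⌉₊ with hB
  have hANY1 : (1:ℝ) ≤ A * N * Y := by
    have h1 : (1:ℝ)*1 ≤ A * (N:ℝ) := mul_le_mul hA1 hN1R zero_le_one hA0.le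
    have h2 : (1:ℝ)*1 ≤ (A * (N:ℝ)) * Y := mul_le_mul (by linarith) hY zero_le_one (by nlinarith)
    linarith
  have hBub : (B:ℝ) < 2 * A * N * Y + 1 := Nat.ceil_lt_add_one (by nlinarith)
  have hBlb : 2 * A * N * Y ≤ (B:ℝ) := Nat.le_ceil _
  set f : (Fin ρ → ℤ) → ℤ × ℤ :=
    fun b => (⌊(L b).re * (2*Y)⌋, ⌊(L b).im * (2*Y)⌋) with hf
  set T : Finset (ℤ × ℤ) :=
    Finset.Icc (-(B:ℤ)) (B:ℤ) ×ˢ Finset.Icc (-(B:ℤ)) (B:ℤ) with hT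
  have hmaps : ∀ b ∈ S, f b ∈ T := by
    intro b hb
    have habs := hLbound b hb
    have key : ∀ t : ℝ, |t| ≤ A * N → ⌊t * (2*Y)⌋ ∈ Finset.Icc (-(B:ℤ)) (B:ℤ) := by
      intro t ht
      rw [Finset.mem_Icc]
      have ht2 : |t * (2*Y)| ≤ 2 * A * N * Y := by
        rw [abs_mul, abs_of_pos (by linarith : (0:ℝ) < 2*Y)]
        nlinarith [abs_nonneg t]
      rw [abs_le] at ht2
      constructor
      · rw [Int.le_floor]
        push_cast
        linarith
      · have h1 : ((⌊t * (2*Y)⌋ : ℤ):ℝ) ≤ (B:ℝ) :=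
          le_trans (Int.floor_le _) (by linarith)
        exact_mod_cast h1
    rw [hT, Finset.mem_product]
    exact ⟨key _ (le_trans (Complex.abs_re_le_norm _) habs),
           key _ (le_trans (Complex.abs_im_le_norm _) habs)⟩
  have hScard : S.card = (N+1)^ρ := by
    rw [hS, Pi.card_Icc]
    simp [Int.card_Icc]
  have hTcard : T.card = (2*B+1)^2 := by
    rw [hT, Finset.card_product, Int.card_Icc]
    have : ((B:ℤ) + 1 - -(B:ℤ)).toNat = 2*B+1 := by omega
    rw [this]; ring
  have hcardlt : T.card < S.card := by
    rw [hScard, hTcard]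
    have hreal : ((2*B+1:ℕ):ℝ) ^ 2 < ((N+1:ℕ):ℝ) ^ ρ := by
      push_cast
      have h1 : (2*(B:ℝ)+1) ≤ 7 * (A * N * Y) := by nlinarith
      have h2 : (2*(B:ℝ)+1)^2 ≤ 49 * A^2 * Y^2 * (N:ℝ)^2 := by nlinarith
      have h3 : (N:ℝ)^ρ < ((N:ℝ)+1)^ρ :=
        pow_lt_pow_left₀ (by linarith) (by positivity) (by omega)
      linarith
    have : ((2*B+1)^2 : ℕ) < ((N+1)^ρ : ℕ) := by exact_mod_cast hreal
    exact this
  obtain ⟨b₁, hb₁, b₂, hb₂, hne, hfeq⟩ :=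
    Finset.exists_ne_map_eq_of_card_lt_of_maps_to hcardlt hmaps
  refine ⟨b₁ - b₂, sub_ne_zero_of_ne hne, ?_, ?_⟩
  · -- |L (b₁ - b₂)| ≤ 1/Y
    have hLsub : (∑ j, α j * (((b₁ - b₂) j : ℤ) : ℂ)) = L b₁ - L b₂ := by
      rw [hL]
      simp only [Pi.sub_apply]
      rw [← Finset.sum_sub_distrib]
      congr 1
      funext j
      push_cast
      ring
    have hre : |(L b₁ - L b₂).re| < 1/(2*Y) := by
      have h1 : ⌊(L b₁).re * (2*Y)⌋ = ⌊(L b₂).re * (2*Y)⌋ := congrArg Prod.fst hfeq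
      have h2 := Int.abs_sub_lt_one_of_floor_eq_floor h1
      have h3 : (L b₁).re * (2*Y) - (L b₂).re * (2*Y) = ((L b₁).re - (L b₂).re) * (2*Y) := by ring
      rw [h3, abs_mul, abs_of_pos (by linarith : (0:ℝ) < 2*Y)] at h2
      rw [Complex.sub_re]
      rw [lt_div_iff₀ (by linarith : (0:ℝ) < 2*Y)]
      linarith
    have him : |(L b₁ - L b₂).im| < 1/(2*Y) := by
      have h1 : ⌊(L b₁).im * (2*Y)⌋ = ⌊(L b₂).im * (2*Y)⌋ := congrArg Prod.snd hfeq
      have h2 := Int.abs_sub_lt_one_of_floor_eq_floor h1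
      have h3 : (L b₁).im * (2*Y) - (L b₂).im * (2*Y) = ((L b₁).im - (L b₂).im) * (2*Y) := by ring
      rw [h3, abs_mul, abs_of_pos (by linarith : (0:ℝ) < 2*Y)] at h2
      rw [Complex.sub_im]
      rw [lt_div_iff₀ (by linarith : (0:ℝ) < 2*Y)]
      linarith
    rw [hLsub]
    calc ‖L b₁ - L b₂‖ ≤ |(L b₁ - L b₂).re| + |(L b₁ - L b₂).im| :=
          Complex.norm_le_abs_re_add_abs_im _
      _ ≤ 1/(2*Y) + 1/(2*Y) := by linarith
      _ = 1/Y := by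
          rw [← add_div, div_eq_div_iff (by positivity : (2*Y:ℝ) ≠ 0) hY0.ne']
          ring
  · -- norm bound
    have hcoord : ∀ i, ((b₁ - b₂) i : ℝ)^2 ≤ (N:ℝ)^2 := by
      intro i
      have h1 := hSmem b₁ hb₁ i
      have h2 := hSmem b₂ hb₂ i
      have h3 : |b₁ i - b₂ i| ≤ (N:ℤ) := by rw [abs_le]; omega
      have h4 : |((b₁ i - b₂ i : ℤ):ℝ)| ≤ (N:ℝ) := by
        calc |((b₁ i - b₂ i : ℤ):ℝ)| = ((|b₁ i - b₂ i| : ℤ):ℝ) := by push_cast; rfl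
          _ ≤ ((N:ℤ):ℝ) := by exact_mod_cast h3
          _ = (N:ℝ) := by push_cast; rfl
      simp only [Pi.sub_apply]
      nlinarith [abs_nonneg ((b₁ i - b₂ i : ℤ):ℝ), sq_abs ((b₁ i - b₂ i : ℤ):ℝ)]
    have hnorm : ‖latticeVec ρ (b₁ - b₂)‖ ≤ Real.sqrt ρ * (N:ℝ) := by
      rw [EuclideanSpace.norm_eq]
      have h1 : (∑ i, ‖latticeVec ρ (b₁ - b₂) i‖^2) ≤ ∑ _i : Fin ρ, (N:ℝ)^2 := by
        apply Finset.sum_le_sum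
        intro i _
        have := hcoord i
        simp only [latticeVec, PiLp.toLp_apply, Real.norm_eq_abs, sq_abs]
        exact this
      have h2 : (∑ _i : Fin ρ, ((N:ℝ)^2)) = (ρ:ℝ) * (N:ℝ)^2 := by
        rw [Finset.sum_const, Finset.card_univ, Fintype.card_fin, nsmul_eq_mul]
      calc Real.sqrt (∑ i, ‖latticeVec ρ (b₁ - b₂) i‖^2)
          ≤ Real.sqrt ((ρ:ℝ) * (N:ℝ)^2) := Real.sqrt_le_sqrt (by rw [← h2]; exact h1)
        _ = Real.sqrt ρ * (N:ℝ) := by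
            rw [Real.sqrt_mul (by positivity), Real.sqrt_sq (by positivity)]
    have hRsplit : R = (49 * A^2) ^ (1/d) * Y ^ (2/d) := by
      rw [hRdef, Real.mul_rpow (by positivity) (by positivity)]
      congr 1
      rw [← Real.rpow_natCast Y 2, ← Real.rpow_mul hY0.le]
      congr 1
      push_cast
      ring
    calc ‖latticeVec ρ (b₁ - b₂)‖ ≤ Real.sqrt ρ * (N:ℝ) := hnorm
      _ ≤ Real.sqrt ρ * (2 * R) := by
          apply mul_le_mul_of_nonneg_left hN2R (Real.sqrt_nonneg _)
      _ = Real.sqrt ρ * 2 * ((49 * A^2) ^ (1/d) * Y ^ (2/d)) := by rw [hRsplit]; ring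
      _ = Real.sqrt ρ * 2 * (49 * A^2) ^ (1/d) * Y ^ (2 / ((ρ:ℝ) - 2)) := by
          rw [hd]; ring
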